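/- Let H be a t-edge-colored graph on vertex set V with coloring c : E(H) → [t], and suppose H contains no rainbow triangle but adding any missing edge in any color creates a rainbow triangle. Let A ⊆ V, B = V \ A, and suppose v, w ∈ B are non-adjacent and have no common neighbor in B. Assign to each v ∈ B the string x_v ∈ [t+1]^A with x_v(a) = c(va) if va ∈ E(H) and x_v(a) = t+1 otherwise. Then for any color class a₀ ∈ [t], there exists a ∈ A such that x_v(a) ≠ x_w(a), x_v(a) ≤ t, x_w(a) ≤ t, x_v(a) ≠ a₀ and x_w(a) ≠ a₀. -/
import Mathlib


/-- An edge-colored graph has a rainbow triangle if it has three mutually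
adjacent vertices whose three connecting edges receive pairwise distinct colors. -/
def HasRainbowTriangle {V : Type*} (G : SimpleGraph V) {t : ℕ}
    (c : Sym2 V → Fin t) : Prop :=
  ∃ u v w : V, G.Adj u v ∧ G.Adj v w ∧ G.Adj u w ∧
    c s(u, v) ≠ c s(v, w) ∧ c s(u, v) ≠ c s(u, w) ∧ c s(v, w) ≠ c s(u, w)

private lemma aux_case {V : Type*} {t : ℕ} (H : SimpleGraph V) (c : Sym2 V → Fin t)
    {v w p q r : V} {a₀ : Fin t}
    (hepq : s(p, q) = s(v, w))
    (hqr : H.Adj q r) (hpr : H.Adj p r)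
    (d1 : a₀ ≠ c s(q, r)) (d2 : a₀ ≠ c s(p, r)) (d3 : c s(q, r) ≠ c s(p, r)) :
    ∃ u, H.Adj u v ∧ H.Adj u w ∧ c s(u, v) ≠ c s(u, w) ∧
      c s(u, v) ≠ a₀ ∧ c s(u, w) ≠ a₀ := by
  refine ⟨r, ?_⟩
  rw [Sym2.eq_iff] at hepq
  rcases hepq with ⟨hp, hq⟩ | ⟨hp, hq⟩
  · subst hp; subst hq
    refine ⟨hpr.symm, hqr.symm, ?_, ?_, ?_⟩
    · rw [show s(r, p) = s(p, r) from Sym2.eq_swap,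
        show s(r, q) = s(q, r) from Sym2.eq_swap]
      exact fun h => d3 h.symm
    · rw [show s(r, p) = s(p, r) from Sym2.eq_swap]
      exact fun h => d2 h.symm
    · rw [show s(r, q) = s(q, r) from Sym2.eq_swap]
      exact fun h => d1 h.symm
  · subst hp; subst hq
    refine ⟨hqr.symm, hpr.symm, ?_, ?_, ?_⟩
    · rw [show s(r, p) = s(p, r) from Sym2.eq_swap,
        show s(r, q) = s(q, r) from Sym2.eq_swap]
      exact d3
    · rw [show s(r, q) = s(q, r) from Sym2.eq_swap]
      exact fun h => d1 h.symm
    · rw [show s(r, p) = s(p, r) from Sym2.eq_swap]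
      exact fun h => d2 h.symm

theorem stmt_10 {V : Type*} [DecidableEq V] (t : ℕ)
    (H : SimpleGraph V) [DecidableRel H.Adj] (c : Sym2 V → Fin t)
    (hfree : ¬ HasRainbowTriangle H c)
    (hsat : ∀ v w : V, v ≠ w → ¬ H.Adj v w → ∀ a : Fin t,
      HasRainbowTriangle (H ⊔ SimpleGraph.fromEdgeSet {s(v, w)})
        (Function.update c s(v, w) a))
    (A : Set V) (B : Set V) (hB : B = Aᶜ)
    (x : V → V → Fin (t + 1))
    (hx : ∀ v u : V, x v u = if h : H.Adj v u then (c s(v, u)).castSucc else Fin.last t)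
    (v w : V) (hvB : v ∈ B) (hwB : w ∈ B) (hvw : v ≠ w) (hadj : ¬ H.Adj v w)
    (hcommon : ¬ ∃ u ∈ B, H.Adj u v ∧ H.Adj u w) :
    ∀ a₀ : Fin t, ∃ a ∈ A, x v a ≠ x w a ∧
      x v a ≠ Fin.last t ∧ x w a ≠ Fin.last t ∧
      x v a ≠ a₀.castSucc ∧ x w a ≠ a₀.castSucc := by
  intro a₀
  obtain ⟨p, q, r, h1, h2, h3, d1, d2, d3⟩ := hsat v w hvw hadj a₀
  set e := s(v, w) with he
  have hG : ∀ {y z : V}, (H ⊔ SimpleGraph.fromEdgeSet {e}).Adj y z →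
      s(y, z) ≠ e → H.Adj y z := by
    intro y z hyz hne
    rcases hyz with h | h
    · exact h
    · exact absurd h.1 (by simpa using hne)
  have epq_qr : s(p, q) ≠ s(q, r) := by
    intro h; rw [Sym2.eq_iff] at h
    rcases h with ⟨hp, hq⟩ | ⟨hp, hq⟩
    · exact h1.ne hp
    · exact h3.ne hp
  have epq_pr : s(p, q) ≠ s(p, r) := by
    intro h; rw [Sym2.eq_iff] at h
    rcases h with ⟨hp, hq⟩ | ⟨hp, hq⟩
    · exact h2.ne hq
    · exact h1.ne hq.symm
  have eqr_pr : s(q, r) ≠ s(p, r) := by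
    intro h; rw [Sym2.eq_iff] at h
    rcases h with ⟨hp, hq⟩ | ⟨hp, hq⟩
    · exact h1.ne hp.symm
    · exact h3.ne hq.symm
  have hone : s(p, q) = e ∨ s(q, r) = e ∨ s(p, r) = e := by
    by_contra hno
    push_neg at hno
    obtain ⟨n1, n2, n3⟩ := hno
    exact hfree ⟨p, q, r, hG h1 n1, hG h2 n2, hG h3 n3, by
      rwa [Function.update_of_ne n1, Function.update_of_ne n2] at d1, by
      rwa [Function.update_of_ne n1, Function.update_of_ne n3] at d2, by
      rwa [Function.update_of_ne n2, Function.update_of_ne n3] at d3⟩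
  have key : ∃ u, H.Adj u v ∧ H.Adj u w ∧ c s(u, v) ≠ c s(u, w) ∧
      c s(u, v) ≠ a₀ ∧ c s(u, w) ≠ a₀ := by
    rcases hone with hpq | hqr | hpr
    · have n2 : s(q, r) ≠ e := fun h => epq_qr (hpq.trans h.symm)
      have n3 : s(p, r) ≠ e := fun h => epq_pr (hpq.trans h.symm)
      rw [Function.update_of_ne n2, hpq, Function.update_self] at d1
      rw [Function.update_of_ne n3, hpq, Function.update_self] at d2
      rw [Function.update_of_ne n2, Function.update_of_ne n3] at d3
      exact aux_case H c hpq (hG h2 n2) (hG h3 n3) d1 d2 d3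
    · have n1 : s(p, q) ≠ e := fun h => epq_qr (h.trans hqr.symm)
      have n3 : s(p, r) ≠ e := fun h => eqr_pr (hqr.trans h.symm)
      rw [Function.update_of_ne n1, hqr, Function.update_self] at d1
      rw [Function.update_of_ne n1, Function.update_of_ne n3] at d2
      rw [hqr, Function.update_self, Function.update_of_ne n3] at d3
      -- edge s(q,r) = e; third vertex p; use aux with (p := q, q := r, r := p)
      refine aux_case H c hqr (hG h3 n3).symm (hG h1 n1).symm ?_ ?_ ?_
      · rw [show s(r, p) = s(p, r) from Sym2.eq_swap]; exact d3
      · rw [show s(q, p) = s(p, q) from Sym2.eq_swap]; exact fun h => d1 h.symm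
      · rw [show s(r, p) = s(p, r) from Sym2.eq_swap,
          show s(q, p) = s(p, q) from Sym2.eq_swap]
        exact fun h => d2 h.symm
    · have n1 : s(p, q) ≠ e := fun h => epq_pr (h.trans hpr.symm)
      have n2 : s(q, r) ≠ e := fun h => eqr_pr (h.trans hpr.symm)
      rw [Function.update_of_ne n1, Function.update_of_ne n2] at d1
      rw [Function.update_of_ne n1, hpr, Function.update_self] at d2
      rw [Function.update_of_ne n2, hpr, Function.update_self] at d3
      -- edge s(p,r) = e; third vertex q; use aux with (p := p, q := r, r := q)
      refine aux_case H c hpr (hG h2 n2).symm (hG h1 n1) ?_ ?_ ?_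
      · rw [show s(r, q) = s(q, r) from Sym2.eq_swap]; exact fun h => d3 h.symm
      · exact fun h => d2 h.symm
      · rw [show s(r, q) = s(q, r) from Sym2.eq_swap]; exact fun h => d1 h.symm
  obtain ⟨u, huv, huw, hne, hna, hnb⟩ := key
  have huA : u ∈ A := by
    by_contra huA
    exact hcommon ⟨u, by rw [hB]; exact huA, huv, huw⟩
  have hxv : x v u = (c s(u, v)).castSucc := by
    rw [hx v u, dif_pos huv.symm, show s(v, u) = s(u, v) from Sym2.eq_swap]
  have hxw : x w u = (c s(u, w)).castSucc := by
    rw [hx w u, dif_pos huw.symm, show s(w, u) = s(u, w) from Sym2.eq_swap]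
  refine ⟨u, huA, ?_, ?_, ?_, ?_, ?_⟩ <;> simp only [hxv, hxw]
  · exact fun h => hne (Fin.castSucc_injective t h)
  · exact (Fin.castSucc_lt_last _).ne
  · exact (Fin.castSucc_lt_last _).ne
  · exact fun h => hna (Fin.castSucc_injective t h)
  · exact fun h => hnb (Fin.castSucc_injective t h)
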